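/- arXiv:2308.02625 — 2 statements merged into one kernel-verified Lean document; each statement's English description precedes it below -/
import Mathlib

section
/- Let K ∈ ℝ^{d×d} be skew-symmetric and let a smooth curve ẑ_m : ℝ → ℝ^d satisfy K ∂_t ẑ_m + L δ_x^{1/2} ẑ_m = ∇S(ẑ_m) for each m (periodic in m with period N), where δ_x^{1/2} ẑ_m := (ẑ_{m+1} − ẑ_{m−1})/(2h). Then the semi-discrete energy E_m := S(ẑ_m) − (1/2)⟨ẑ_m, L δ_x^{1/2} ẑ_m⟩ and flux F_m := (1/4)[⟨ẑ_m, L ∂_t ẑ_{m−1}⟩ + ⟨ẑ_{m−1}, L ∂_t ẑ_m⟩] satisfy the semi-discrete local energy conservation law ∂_t E_m + (F_{m+1} − F_m)/h = 0. -/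
open Matrix

lemma skew_dot {d : ℕ} {M : Matrix (Fin d) (Fin d) ℝ} (hM : Mᵀ = -M)
    (a b : Fin d → ℝ) : a ⬝ᵥ M.mulVec b = -(b ⬝ᵥ M.mulVec a) := by
  rw [Matrix.dotProduct_mulVec, ← Matrix.mulVec_transpose, hM, Matrix.neg_mulVec,
    neg_dotProduct, dotProduct_comm]

lemma skew_dot_self {d : ℕ} {M : Matrix (Fin d) (Fin d) ℝ} (hM : Mᵀ = -M)
    (a : Fin d → ℝ) : a ⬝ᵥ M.mulVec a = 0 := by
  have := skew_dot hM a a; linarith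

lemma hasDerivAt_dot_mulVec {d : ℕ} (M : Matrix (Fin d) (Fin d) ℝ)
    (a b : ℝ → Fin d → ℝ) (a' b' : Fin d → ℝ) (t : ℝ)
    (ha : ∀ i, HasDerivAt (fun s => a s i) (a' i) t)
    (hb : ∀ i, HasDerivAt (fun s => b s i) (b' i) t) :
    HasDerivAt (fun s => a s ⬝ᵥ M.mulVec (b s))
      (a' ⬝ᵥ M.mulVec (b t) + a t ⬝ᵥ M.mulVec b') t := by
  simp only [dotProduct, Matrix.mulVec, ← Finset.sum_add_distrib]
  apply HasDerivAt.fun_sum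
  intro i _
  have hib : HasDerivAt (fun s => ∑ j, M i j * b s j) (∑ j, M i j * b' j) t := by
    apply HasDerivAt.fun_sum
    intro j _
    exact (hb j).const_mul (M i j)
  exact (ha i).mul hib

/-- Semi-discrete local energy conservation law. If the smooth curves
`ẑ_m : ℝ → ℝ^d` (N-periodic in `m`) satisfy
`K ∂_t ẑ_m + L δ_x^{1/2} ẑ_m = ∇S(ẑ_m)` with `K, L` skew-symmetric, then
`E_m := S(ẑ_m) − (1/2)⟨ẑ_m, L δ_x^{1/2} ẑ_m⟩` and
`F_m := (1/4)[⟨ẑ_m, L ∂_t ẑ_{m−1}⟩ + ⟨ẑ_{m−1}, L ∂_t ẑ_m⟩]` satisfy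
`∂_t E_m + (F_{m+1} − F_m)/h = 0`. -/
theorem semidiscrete_local_energy_conservation {d : ℕ} (N : ℕ) (h : ℝ) (hh : 0 < h)
    (K L : Matrix (Fin d) (Fin d) ℝ) (hK : Kᵀ = -K) (hL : Lᵀ = -L)
    (S : (Fin d → ℝ) → ℝ) (gradS : (Fin d → ℝ) → (Fin d → ℝ))
    (z : ℤ → ℝ → (Fin d → ℝ))
    (hper : ∀ m t, z (m + N) t = z m t)
    -- time derivative of each component of each curve
    (zt : ℤ → ℝ → (Fin d → ℝ))
    (hzt : ∀ m t i, HasDerivAt (fun s => z m s i) (zt m t i) t)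
    -- chain rule for the energy density `S ∘ ẑ_m`
    (hS : ∀ m t, HasDerivAt (fun s => S (z m s)) (zt m t ⬝ᵥ gradS (z m t)) t)
    -- the semi-discrete multi-symplectic equations
    (hPDE : ∀ m t,
      K.mulVec (zt m t) + L.mulVec ((1 / (2 * h)) • (z (m + 1) t - z (m - 1) t))
        = gradS (z m t))
    (E F : ℤ → ℝ → ℝ)
    (hE : ∀ m t, E m t = S (z m t)
      - (1/2 : ℝ) * (z m t ⬝ᵥ L.mulVec ((1 / (2 * h)) • (z (m + 1) t - z (m - 1) t))))
    (hF : ∀ m t, F m t = (1/4 : ℝ) *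
      (z m t ⬝ᵥ L.mulVec (zt (m - 1) t) + z (m - 1) t ⬝ᵥ L.mulVec (zt m t))) :
    ∀ m t, deriv (fun s => E m s) t + (F (m + 1) t - F m t) / h = 0 := by
  intro m t
  have hEfun : (fun s => E m s) = fun s => S (z m s)
      - (1/2 : ℝ) * (z m s ⬝ᵥ L.mulVec ((1 / (2 * h)) • (z (m + 1) s - z (m - 1) s))) := by
    funext s; exact hE m s
  have hdot : HasDerivAt
      (fun s => z m s ⬝ᵥ L.mulVec ((1 / (2 * h)) • (z (m + 1) s - z (m - 1) s)))
      (zt m t ⬝ᵥ L.mulVec ((1 / (2 * h)) • (z (m + 1) t - z (m - 1) t))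
        + z m t ⬝ᵥ L.mulVec ((1 / (2 * h)) • (zt (m + 1) t - zt (m - 1) t))) t := by
    apply hasDerivAt_dot_mulVec L (fun s => z m s)
      (fun s => (1 / (2 * h)) • (z (m + 1) s - z (m - 1) s))
    · exact hzt m t
    · intro i
      simp only [Pi.smul_apply, Pi.sub_apply, smul_eq_mul]
      exact ((hzt (m + 1) t i).sub (hzt (m - 1) t i)).const_mul _
  have hder : HasDerivAt (fun s => E m s)
      (zt m t ⬝ᵥ gradS (z m t)
        - (1/2 : ℝ) * (zt m t ⬝ᵥ L.mulVec ((1 / (2 * h)) • (z (m + 1) t - z (m - 1) t))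
          + z m t ⬝ᵥ L.mulVec ((1 / (2 * h)) • (zt (m + 1) t - zt (m - 1) t)))) t := by
    rw [hEfun]
    exact (hS m t).sub (hdot.const_mul (1/2 : ℝ))
  rw [hder.deriv, hF, hF]
  have hgrad : zt m t ⬝ᵥ gradS (z m t)
      = zt m t ⬝ᵥ L.mulVec ((1 / (2 * h)) • (z (m + 1) t - z (m - 1) t)) := by
    rw [← hPDE m t, dotProduct_add, skew_dot_self hK, zero_add]
  rw [hgrad]
  have e1 : zt m t ⬝ᵥ L.mulVec (z (m + 1) t) = -(z (m + 1) t ⬝ᵥ L.mulVec (zt m t)) :=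
    skew_dot hL _ _
  have e2 : zt m t ⬝ᵥ L.mulVec (z (m - 1) t) = -(z (m - 1) t ⬝ᵥ L.mulVec (zt m t)) :=
    skew_dot hL _ _
  have e3 : (m : ℤ) + 1 - 1 = m := by ring
  simp only [Matrix.mulVec_smul, Matrix.mulVec_sub, dotProduct_smul,
    dotProduct_sub, smul_eq_mul, e1, e2, e3]
  field_simp
  ring
end

section
/- Consider the fully discrete linear wave scheme δ_t² u_j^n − μ_t² (δ_x^{1/2})² u_j^n = 0 on an N-periodic spatial grid, equivalently the system −δ_t v_j^n + δ_x^{1/2} μ_t w_j^n = 0, δ_t u_j^n = μ_t v_j^n, δ_x^{1/2} μ_t u_j^n = μ_t w_j^n. Then the discrete polarized global energy ℰ̄(t_n) = (Δx/6) Σ_{j=1}^N [ 2(δ_x^{1/2} u_j^n)(δ_x^{1/2} u_j^{n+1}) + (δ_x^{1/2} u_j^n)² + 2 v_j^n v_j^{n+1} + (v_j^n)² ] is conserved: ℰ̄(t_{n+1}) = ℰ̄(t_n). -/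
/-- periodic central difference operator on an `N`-periodic grid -/
noncomputable def Dx {N : ℕ} (Δx : ℝ) (a : ZMod N → ℝ) : ZMod N → ℝ :=
  fun j => (a (j + 1) - a (j - 1)) / (2 * Δx)


lemma sum_shift {N : ℕ} [NeZero N] (F : ZMod N → ℝ) (k : ZMod N) :
    ∑ j : ZMod N, F (j + k) = ∑ j : ZMod N, F j :=
  Fintype.sum_equiv (Equiv.addRight k) _ _ (fun _ => rfl)

lemma dx_antisym {N : ℕ} [NeZero N] (Δx : ℝ) (a b : ZMod N → ℝ) :
    ∑ j : ZMod N, Dx Δx a j * b j = -∑ j : ZMod N, a j * Dx Δx b j := by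
  have h1 : ∑ j : ZMod N, a (j+1) * b j = ∑ j : ZMod N, a j * b (j-1) := by
    have := sum_shift (fun j => a j * b (j-1)) 1
    simpa using this
  have h2 : ∑ j : ZMod N, a (j-1) * b j = ∑ j : ZMod N, a j * b (j+1) := by
    have := sum_shift (fun j => a j * b (j+1)) (-1)
    simpa [sub_eq_add_neg] using this
  calc ∑ j : ZMod N, Dx Δx a j * b j
      = ∑ j : ZMod N, (a (j+1) * b j - a (j-1) * b j) * (1/(2*Δx)) :=
        Finset.sum_congr rfl fun j _ => by simp only [Dx]; ring
    _ = (∑ j : ZMod N, a (j+1) * b j - ∑ j : ZMod N, a (j-1) * b j) * (1/(2*Δx)) := by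
        rw [← Finset.sum_mul, Finset.sum_sub_distrib]
    _ = (∑ j : ZMod N, a j * b (j-1) - ∑ j : ZMod N, a j * b (j+1)) * (1/(2*Δx)) := by
        rw [h1, h2]
    _ = ∑ j : ZMod N, (a j * b (j-1) - a j * b (j+1)) * (1/(2*Δx)) := by
        rw [← Finset.sum_sub_distrib, Finset.sum_mul]
    _ = -∑ j : ZMod N, a j * Dx Δx b j := by
        rw [← Finset.sum_neg_distrib]
        exact Finset.sum_congr rfl fun j _ => by simp only [Dx]; ring

lemma DxDx {N : ℕ} (Δx : ℝ) (f : ZMod N → ℝ) (j : ZMod N) :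
    Dx Δx (Dx Δx f) j = (f (j+2) - 2 * f j + f (j-2)) / (2*Δx)^2 := by
  have e1 : j + 1 + 1 = j + 2 := by ring
  have e2 : j + 1 - 1 = j := by ring
  have e3 : j - 1 + 1 = j := by ring
  have e4 : j - 1 - 1 = j - 2 := by ring
  simp only [Dx, e1, e2, e3, e4]
  ring


/-- For the fully discrete linear wave scheme
`δ_t² u − μ_t² (δ_x^{1/2})² u = 0` on an `N`-periodic grid, with
`v_j^n = δ_t u_j^n − (Δt/2) μ_t (δ_x^{1/2})² u_j^n`, the discrete polarized global energy
`ℰ̄(t_n) = (Δx/6) Σ_j [2(δ_x u_j^n)(δ_x u_j^{n+1}) + (δ_x u_j^n)² + 2 v_j^n v_j^{n+1} + (v_j^n)²]`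
is conserved. -/
theorem wave_LIGEP_energy_conservation {N : ℕ} [NeZero N]
    (Δt Δx : ℝ) (hΔt : 0 < Δt) (hΔx : 0 < Δx)
    (u v : ZMod N → ℕ → ℝ)
    (hscheme : ∀ (j : ZMod N) (n : ℕ),
      (u j (n + 2) - 2 * u j (n + 1) + u j n) / Δt ^ 2
        - Dx Δx (Dx Δx (fun i => (u i (n + 2) + 2 * u i (n + 1) + u i n) / 4)) j = 0)
    (hv : ∀ (j : ZMod N) (n : ℕ),
      v j n = (u j (n + 1) - u j n) / Δt
        - (Δt / 2) * Dx Δx (Dx Δx (fun i => (u i (n + 1) + u i n) / 2)) j)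
    (E : ℕ → ℝ)
    (hE : ∀ n, E n = (Δx / 6) * ∑ j : ZMod N,
      (2 * Dx Δx (fun i => u i n) j * Dx Δx (fun i => u i (n + 1)) j
        + (Dx Δx (fun i => u i n) j) ^ 2
        + 2 * v j n * v j (n + 1) + (v j n) ^ 2)) :
    ∀ n, E (n + 1) = E n := by
  intro n
  have hΔt' : Δt ≠ 0 := hΔt.ne'
  have hΔx' : Δx ≠ 0 := hΔx.ne'
  -- cleared pointwise consequences of the scheme
  have h1 : ∀ j : ZMod N, 8*Δx^2 * (v j (n+1) - v j n)
      = Δt * (u (j+2) (n+1) + u (j+2) n - 2*u j (n+1) - 2*u j n + u (j-2) (n+1) + u (j-2) n) := by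
    intro j
    have hs := hscheme j n
    rw [hv j (n+1), hv j n]
    simp only [DxDx] at hs ⊢
    simp only [show n+1+1 = n+2 by omega] at *
    field_simp at hs ⊢
    linear_combination 8 * hs
  have h2 : ∀ j : ZMod N, Δt * (v j (n+1) + v j n) = 2 * (u j (n+1) - u j n) := by
    intro j
    have hs := hscheme j n
    rw [hv j (n+1), hv j n]
    simp only [DxDx] at hs ⊢
    simp only [show n+1+1 = n+2 by omega] at *
    field_simp at hs ⊢
    linear_combination hs
  have h3 : ∀ j : ZMod N, 8*Δx^2 * (v j (n+2) - v j (n+1))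
      = Δt * (u (j+2) (n+2) + u (j+2) (n+1) - 2*u j (n+2) - 2*u j (n+1) + u (j-2) (n+2) + u (j-2) (n+1)) := by
    intro j
    have hs := hscheme j (n+1)
    rw [hv j (n+2), hv j (n+1)]
    simp only [DxDx] at hs ⊢
    simp only [show n+1+1 = n+2 by omega, show n+2+1 = n+3 by omega, show n+1+2 = n+3 by omega] at *
    field_simp at hs ⊢
    linear_combination 8 * hs
  have h4 : ∀ j : ZMod N, Δt * (v j (n+2) + v j (n+1)) = 2 * (u j (n+2) - u j (n+1)) := by
    intro j
    have hs := hscheme j (n+1)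
    rw [hv j (n+2), hv j (n+1)]
    simp only [DxDx] at hs ⊢
    simp only [show n+1+1 = n+2 by omega, show n+2+1 = n+3 by omega, show n+1+2 = n+3 by omega] at *
    field_simp at hs ⊢
    linear_combination hs
  -- the polarized kinetic-part identity
  have hvp : ∀ j : ZMod N,
      4*Δx^2 * (2 * v j (n+1) * v j (n+2) + v j (n+1)^2 - 2 * v j n * v j (n+1) - v j n ^2)
      = (u (j+2) (n+2) + u (j+2) (n+1) - 2*u j (n+2) - 2*u j (n+1) + u (j-2) (n+2) + u (j-2) (n+1))
          * (u j (n+1) - u j n)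
        + (u (j+2) (n+1) + u (j+2) n - 2*u j (n+1) - 2*u j n + u (j-2) (n+1) + u (j-2) n)
          * (u j (n+2) - u j n) := by
    intro j
    linear_combination ((v j (n+1) + v j n)/2) * h3 j
      + ((v j (n+2) + 2*v j (n+1) + v j n)/2) * h1 j
      + ((u (j+2) (n+2) + u (j+2) (n+1) - 2*u j (n+2) - 2*u j (n+1) + u (j-2) (n+2) + u (j-2) (n+1))/2) * h2 j
      + ((u (j+2) (n+1) + u (j+2) n - 2*u j (n+1) - 2*u j n + u (j-2) (n+1) + u (j-2) n)/2) * (h4 j + h2 j)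
  -- pointwise rewriting of the energy-difference summand
  have hpt : ∀ j : ZMod N,
      (2 * Dx Δx (fun i => u i (n+1)) j * Dx Δx (fun i => u i (n+2)) j
        + (Dx Δx (fun i => u i (n+1)) j) ^ 2
        + 2 * v j (n+1) * v j (n+2) + (v j (n+1)) ^ 2)
      - (2 * Dx Δx (fun i => u i n) j * Dx Δx (fun i => u i (n+1)) j
        + (Dx Δx (fun i => u i n) j) ^ 2
        + 2 * v j n * v j (n+1) + (v j n) ^ 2)
      = (2 * (Dx Δx (fun i => u i (n+1)) j * Dx Δx (fun i => u i (n+2)) j)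
          + Dx Δx (fun i => u i (n+1)) j * Dx Δx (fun i => u i (n+1)) j
          - 2 * (Dx Δx (fun i => u i n) j * Dx Δx (fun i => u i (n+1)) j)
          - Dx Δx (fun i => u i n) j * Dx Δx (fun i => u i n) j)
        + (2 * (Dx Δx (Dx Δx (fun i => (u i (n+2) + u i (n+1))/2)) j * (u j (n+1) - u j n))
          + 2 * (Dx Δx (Dx Δx (fun i => (u i (n+1) + u i n)/2)) j * (u j (n+2) - u j n))) := by
    intro j
    have hq := hvp j
    simp only [DxDx]
    field_simp
    linear_combination hq
  rw [hE (n+1), hE n]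
  simp only [show n+1+1 = n+2 by omega]
  congr 1
  rw [← sub_eq_zero, ← Finset.sum_sub_distrib]
  rw [Finset.sum_congr rfl fun j _ => hpt j]
  rw [Finset.sum_add_distrib, Finset.sum_add_distrib, ← Finset.mul_sum, ← Finset.mul_sum]
  have C1 : ∑ j : ZMod N, Dx Δx (Dx Δx (fun i => (u i (n+2) + u i (n+1))/2)) j * (u j (n+1) - u j n)
      = -∑ j : ZMod N, Dx Δx (fun i => (u i (n+2) + u i (n+1))/2) j
          * Dx Δx (fun i => u i (n+1) - u i n) j :=
    dx_antisym Δx (Dx Δx (fun i => (u i (n+2) + u i (n+1))/2)) (fun i => u i (n+1) - u i n)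
  have C2 : ∑ j : ZMod N, Dx Δx (Dx Δx (fun i => (u i (n+1) + u i n)/2)) j * (u j (n+2) - u j n)
      = -∑ j : ZMod N, Dx Δx (fun i => (u i (n+1) + u i n)/2) j
          * Dx Δx (fun i => u i (n+2) - u i n) j :=
    dx_antisym Δx (Dx Δx (fun i => (u i (n+1) + u i n)/2)) (fun i => u i (n+2) - u i n)
  rw [C1, C2]
  have final : ∑ j : ZMod N,
      (2 * (Dx Δx (fun i => u i (n+1)) j * Dx Δx (fun i => u i (n+2)) j)
        + Dx Δx (fun i => u i (n+1)) j * Dx Δx (fun i => u i (n+1)) j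
        - 2 * (Dx Δx (fun i => u i n) j * Dx Δx (fun i => u i (n+1)) j)
        - Dx Δx (fun i => u i n) j * Dx Δx (fun i => u i n) j)
      = 2 * ∑ j : ZMod N, Dx Δx (fun i => (u i (n+2) + u i (n+1))/2) j
            * Dx Δx (fun i => u i (n+1) - u i n) j
        + 2 * ∑ j : ZMod N, Dx Δx (fun i => (u i (n+1) + u i n)/2) j
            * Dx Δx (fun i => u i (n+2) - u i n) j := by
    rw [Finset.mul_sum, Finset.mul_sum, ← Finset.sum_add_distrib]
    refine Finset.sum_congr rfl fun j _ => ?_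
    simp only [Dx]
    ring
  rw [final]
  ring
end
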